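/- arXiv:1812.09436 — 2 statements merged into one kernel-verified Lean document; each statement's English description precedes it below -/
import Mathlib

section
/- Let k ≥ 2 and n ≥ 2 be integers, F the free group on generators φ_1, …, φ_n, and Ψ : F → (ℤ/kℤ)^n the homomorphism sending φ_i to the i-th standard basis vector. Then the abelianization (ker Ψ)/[ker Ψ, ker Ψ] is generated by the classes of the elements φ_i^k for 1 ≤ i ≤ n, together with the classes of the elements (φ_1^{g_1}⋯φ_n^{g_n})·[φ_j, φ_l]·(φ_1^{g_1}⋯φ_n^{g_n})⁻¹ for all integers 1 ≤ j < l ≤ n and 0 ≤ g_d ≤ k−1 (d = 1, …, n). (This gives a finite generating set for the first homology group of the punctured generalized Fermat curve of type (k,n).) -/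
open scoped commutatorElement

section Aux

variable {G : Type*} [Group G]

lemma aux_comm_mul_right (a b c : G) : ⁅a, b * c⁆ = ⁅a, b⁆ * (b * ⁅a, c⁆ * b⁻¹) := by group

lemma aux_comm_inv_right (a b : G) : ⁅a, b⁻¹⁆ = b⁻¹ * ⁅a, b⁆⁻¹ * b := by group

lemma aux_comm_mul_left (a b c : G) : ⁅a * c, b⁆ = a * ⁅c, b⁆ * a⁻¹ * ⁅a, b⁆ := by group

lemma aux_comm_inv_left (a b : G) : ⁅a⁻¹, b⁆ = a⁻¹ * ⁅a, b⁆⁻¹ * a := by group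

lemma aux_conj_decomp (w r c : G) :
    w * c * w⁻¹ = (w * r⁻¹) * (r * c * r⁻¹) * (w * r⁻¹)⁻¹ := by group

end Aux

/-- Let `k ≥ 2`, `n ≥ 2`, `F` the free group on generators `φ_1, …, φ_n`, and
`Ψ : F → (ℤ/kℤ)ⁿ` the homomorphism sending `φ_i` to the `i`-th standard basis vector.
Then the abelianization `(ker Ψ) / [ker Ψ, ker Ψ]` is generated by the classes of the
elements `φ_i ^ k` for `1 ≤ i ≤ n`, together with the classes of the elements
`(φ_1^{g_1} ⋯ φ_n^{g_n}) [φ_j, φ_l] (φ_1^{g_1} ⋯ φ_n^{g_n})⁻¹` for all integers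
`1 ≤ j < l ≤ n` and `0 ≤ g_d ≤ k − 1`. -/
theorem homology_generators_of_punctured_generalized_fermat (k n : ℕ) (hk : 2 ≤ k) (hn : 2 ≤ n)
    (Ψ : FreeGroup (Fin n) →* Multiplicative (Fin n → ZMod k))
    (hΨ : ∀ i : Fin n, Ψ (FreeGroup.of i) = Multiplicative.ofAdd (Pi.single i 1)) :
    Subgroup.closure
      {a : Abelianization Ψ.ker |
        ∃ x : Ψ.ker, a = Abelianization.of x ∧
          ((∃ i : Fin n, (x : FreeGroup (Fin n)) = FreeGroup.of i ^ k) ∨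
            (∃ g : Fin n → ℕ, (∀ d, g d ≤ k - 1) ∧
              ∃ j l : Fin n, j < l ∧
                (x : FreeGroup (Fin n)) =
                  (List.ofFn fun d : Fin n => FreeGroup.of d ^ g d).prod *
                    ⁅FreeGroup.of j, FreeGroup.of l⁆ *
                    ((List.ofFn fun d : Fin n => FreeGroup.of d ^ g d).prod)⁻¹))} = ⊤ := by
  haveI : NeZero k := ⟨by omega⟩
  haveI : Fact (1 < k) := ⟨by omega⟩
  set F := FreeGroup (Fin n)
  set S : Set (Abelianization Ψ.ker) :=
      {a : Abelianization Ψ.ker |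
        ∃ x : Ψ.ker, a = Abelianization.of x ∧
          ((∃ i : Fin n, (x : FreeGroup (Fin n)) = FreeGroup.of i ^ k) ∨
            (∃ g : Fin n → ℕ, (∀ d, g d ≤ k - 1) ∧
              ∃ j l : Fin n, j < l ∧
                (x : FreeGroup (Fin n)) =
                  (List.ofFn fun d : Fin n => FreeGroup.of d ^ g d).prod *
                    ⁅FreeGroup.of j, FreeGroup.of l⁆ *
                    ((List.ofFn fun d : Fin n => FreeGroup.of d ^ g d).prod)⁻¹))} with hS
  -- The subgroup K of F of elements of ker Ψ whose class lies in the closure of S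
  let K : Subgroup F :=
    { carrier := {x : F | ∃ h : x ∈ Ψ.ker,
        Abelianization.of (⟨x, h⟩ : Ψ.ker) ∈ Subgroup.closure S}
      one_mem' := ⟨one_mem _, by
        have : (⟨(1 : F), one_mem _⟩ : Ψ.ker) = 1 := rfl
        rw [this, map_one]; exact one_mem _⟩
      mul_mem' := by
        rintro x y ⟨hx, hx'⟩ ⟨hy, hy'⟩
        refine ⟨mul_mem hx hy, ?_⟩
        have : (⟨x * y, mul_mem hx hy⟩ : Ψ.ker) = ⟨x, hx⟩ * ⟨y, hy⟩ := rfl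
        rw [this, map_mul]; exact mul_mem hx' hy'
      inv_mem' := by
        rintro x ⟨hx, hx'⟩
        refine ⟨inv_mem hx, ?_⟩
        have : (⟨x⁻¹, inv_mem hx⟩ : Ψ.ker) = (⟨x, hx⟩ : Ψ.ker)⁻¹ := rfl
        rw [this, map_inv]; exact inv_mem hx' }
  have hKmem : ∀ (x : F) (h : x ∈ Ψ.ker),
      Abelianization.of (⟨x, h⟩ : Ψ.ker) ∈ Subgroup.closure S → x ∈ K := by
    intro x h h'; exact ⟨h, h'⟩
  have hKker : ∀ x ∈ K, x ∈ Ψ.ker := by rintro x ⟨h, _⟩; exact h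
  -- (a) conjugation by an element of ker Ψ preserves K
  have hconj : ∀ u x : F, u ∈ Ψ.ker → x ∈ K → u * x * u⁻¹ ∈ K := by
    rintro u x hu ⟨hx, hx'⟩
    have hm : u * x * u⁻¹ ∈ Ψ.ker := by
      rw [Ψ.mem_ker] at hu hx ⊢
      rw [map_mul, map_mul, map_inv, hu, hx]; simp
    refine ⟨hm, ?_⟩
    have : (⟨u * x * u⁻¹, hm⟩ : Ψ.ker) = ⟨u, hu⟩ * ⟨x, hx⟩ * (⟨u, hu⟩)⁻¹ := rfl
    rw [this, map_mul, map_mul, map_inv]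
    have : Abelianization.of (⟨u, hu⟩ : Ψ.ker) * Abelianization.of (⟨x, hx⟩ : Ψ.ker) *
        (Abelianization.of (⟨u, hu⟩ : Ψ.ker))⁻¹ = Abelianization.of (⟨x, hx⟩ : Ψ.ker) := by
      rw [mul_comm (Abelianization.of _) (Abelianization.of (⟨x, hx⟩ : Ψ.ker))]
      group
    rw [this]; exact hx'
  -- computation of Ψ on canonical words
  have hΨword : ∀ g : Fin n → ℕ,
      Ψ ((List.ofFn fun d : Fin n => FreeGroup.of d ^ g d).prod) =
        Multiplicative.ofAdd (fun e : Fin n => (g e : ZMod k)) := by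
    intro g
    rw [map_list_prod, List.map_ofFn, List.prod_ofFn]
    have h1 : ∀ d : Fin n, (Ψ ∘ fun d : Fin n => FreeGroup.of d ^ g d) d =
        Multiplicative.ofAdd (Pi.single d ((g d : ZMod k))) := by
      intro d
      simp only [Function.comp_apply, map_pow, hΨ d, ← ofAdd_nsmul]
      congr 1
      rw [← Pi.single_smul]
      congr 1
      simp [nsmul_eq_mul]
    calc (∏ d : Fin n, (Ψ ∘ fun d : Fin n => FreeGroup.of d ^ g d) d)
        = ∏ d : Fin n, Multiplicative.ofAdd (Pi.single d ((g d : ZMod k))) := by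
          exact Finset.prod_congr rfl fun d _ => h1 d
      _ = Multiplicative.ofAdd (∑ d : Fin n, Pi.single d ((g d : ZMod k))) := by
          rw [ofAdd_sum]
      _ = Multiplicative.ofAdd (fun e : Fin n => (g e : ZMod k)) := by
          rw [Finset.univ_sum_single (fun e : Fin n => ((g e : ZMod k)))]
  -- (b) coset representatives
  have hrep : ∀ w : F, ∃ g : Fin n → ℕ, (∀ d, g d ≤ k - 1) ∧
      Ψ ((List.ofFn fun d : Fin n => FreeGroup.of d ^ g d).prod) = Ψ w := by
    intro w
    refine ⟨fun d => ((Ψ w).toAdd d).val, fun d => ?_, ?_⟩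
    · have := ZMod.val_lt ((Ψ w).toAdd d)
      show ((Ψ w).toAdd d).val ≤ k - 1
      omega
    · rw [hΨword]
      have : (fun e : Fin n => ((((Ψ w).toAdd e).val : ZMod k))) = (Ψ w).toAdd := by
        funext e; simp [ZMod.natCast_val]
      rw [this]
      rfl
  -- commutators of generators are in ker Ψ
  have hcomm_ker : ∀ a b : F, ⁅a, b⁆ ∈ Ψ.ker := by
    intro a b
    rw [Ψ.mem_ker, commutatorElement_def, map_mul, map_mul, map_mul, map_inv, map_inv]
    rw [mul_comm (Ψ a) (Ψ b)]
    group
  -- (c) all conjugates of generator commutators are in K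
  have hconjcomm : ∀ (w : F) (j l : Fin n), j < l →
      w * ⁅FreeGroup.of j, FreeGroup.of l⁆ * w⁻¹ ∈ K := by
    intro w j l hjl
    obtain ⟨g, hg, hgΨ⟩ := hrep w
    set r : F := (List.ofFn fun d : Fin n => FreeGroup.of d ^ g d).prod with hr
    have hrc : r * ⁅FreeGroup.of j, FreeGroup.of l⁆ * r⁻¹ ∈ Ψ.ker := by
      rw [Ψ.mem_ker, map_mul, map_mul, map_inv]
      have := hcomm_ker (FreeGroup.of j) (FreeGroup.of l)
      rw [Ψ.mem_ker] at this
      rw [this]; group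
    have hrcK : r * ⁅FreeGroup.of j, FreeGroup.of l⁆ * r⁻¹ ∈ K := by
      refine hKmem _ hrc (Subgroup.subset_closure ?_)
      exact ⟨⟨_, hrc⟩, rfl, Or.inr ⟨g, hg, j, l, hjl, rfl⟩⟩
    have hwr : w * r⁻¹ ∈ Ψ.ker := by
      rw [Ψ.mem_ker, map_mul, map_inv, hgΨ]; group
    rw [aux_conj_decomp w r]
    exact hconj _ _ hwr hrcK
  -- (d) the subgroup C of elements all of whose F-conjugates are in K
  let C : Subgroup F :=
    { carrier := {x : F | ∀ w : F, w * x * w⁻¹ ∈ K}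
      one_mem' := by intro w; rw [mul_one, mul_inv_cancel]; exact K.one_mem
      mul_mem' := by
        intro x y hx hy w
        have : w * (x * y) * w⁻¹ = (w * x * w⁻¹) * (w * y * w⁻¹) := by simp only [F] at *; group
        rw [this]; exact K.mul_mem (hx w) (hy w)
      inv_mem' := by
        intro x hx w
        have : w * x⁻¹ * w⁻¹ = (w * x * w⁻¹)⁻¹ := by simp only [F] at *; group
        rw [this]; exact K.inv_mem (hx w) }
  have hCnormal : ∀ u x : F, x ∈ C → u * x * u⁻¹ ∈ C := by
    intro u x hx w
    have : w * (u * x * u⁻¹) * w⁻¹ = (w * u) * x * (w * u)⁻¹ := by simp only [F] at *; group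
    rw [this]; exact hx (w * u)
  -- base case: commutators of generators
  have hbase : ∀ i j : Fin n, ⁅FreeGroup.of i, FreeGroup.of j⁆ ∈ C := by
    intro i j
    rcases lt_trichotomy i j with h | h | h
    · intro w; exact hconjcomm w i j h
    · subst h; simpa using C.one_mem
    · have : ⁅FreeGroup.of i, FreeGroup.of j⁆ = ⁅FreeGroup.of j, FreeGroup.of i⁆⁻¹ := by group
      rw [this]; exact C.inv_mem (fun w => hconjcomm w j i h)
  -- (e) all commutators are in C
  have hcommC1 : ∀ (i : Fin n) (b : F), ⁅FreeGroup.of i, b⁆ ∈ C := by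
    intro i b
    induction b using FreeGroup.induction_on with
    | C1 => simpa using C.one_mem
    | of x => exact hbase i x
    | inv_of x hx =>
        rw [aux_comm_inv_right]
        exact hCnormal _ _ (C.inv_mem hx)
    | mul x y hx hy =>
        rw [aux_comm_mul_right]
        exact C.mul_mem hx (hCnormal _ _ hy)
  have hcommC : ∀ a b : F, ⁅a, b⁆ ∈ C := by
    intro a b
    induction a using FreeGroup.induction_on with
    | C1 => have : ⁅(1 : F), b⁆ = 1 := by group
            rw [this]; exact C.one_mem
    | of x => exact hcommC1 x b
    | inv_of x hx =>
        rw [aux_comm_inv_left]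
        exact hCnormal _ _ (C.inv_mem hx)
    | mul x y hx hy =>
        rw [aux_comm_mul_left]
        exact C.mul_mem (hCnormal _ _ hy) hx
  -- powers of generators
  have hpow_ker : ∀ i : Fin n, (FreeGroup.of i : F) ^ k ∈ Ψ.ker := by
    intro i
    rw [Ψ.mem_ker, map_pow, hΨ i, ← ofAdd_nsmul]
    have : (k • Pi.single i (1 : ZMod k)) = (0 : Fin n → ZMod k) := by
      rw [← Pi.single_smul]
      have : (k • (1 : ZMod k)) = 0 := by
        simp [nsmul_eq_mul, ZMod.natCast_self]
      rw [this, Pi.single_zero]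
    rw [this]; rfl
  have hpowK : ∀ i : Fin n, (FreeGroup.of i : F) ^ k ∈ K := by
    intro i
    refine hKmem _ (hpow_ker i) (Subgroup.subset_closure ?_)
    exact ⟨⟨_, hpow_ker i⟩, rfl, Or.inl ⟨i, rfl⟩⟩
  -- (f) the subgroup M
  set M : Subgroup F := C ⊔ Subgroup.closure {x : F | ∃ i : Fin n, x = FreeGroup.of i ^ k}
    with hM
  have hCM : C ≤ M := le_sup_left
  have hMK : M ≤ K := by
    rw [hM]
    refine sup_le ?_ ?_
    · intro x hx
      have := hx 1
      simpa using this
    · rw [Subgroup.closure_le]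
      rintro x ⟨i, rfl⟩
      exact hpowK i
  have hpowM : ∀ i : Fin n, (FreeGroup.of i : F) ^ k ∈ M := by
    intro i
    exact Subgroup.mem_sup_right (Subgroup.subset_closure ⟨i, rfl⟩)
  haveI hMnormal : M.Normal := by
    constructor
    intro m hm g
    have : g * m * g⁻¹ = ⁅g, m⁆ * m := by simp only [F] at *; group
    rw [this]
    exact M.mul_mem (hCM (hcommC g m)) hm
  -- the quotient map
  set π : F →* F ⧸ M := QuotientGroup.mk' M with hπ
  have hπcomm : ∀ x y : F ⧸ M, x * y = y * x := by
    intro x y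
    induction x using QuotientGroup.induction_on with
    | _ a =>
      induction y using QuotientGroup.induction_on with
      | _ b =>
        have h1 : π ⁅a, b⁆ = 1 := by
          rw [hπ, QuotientGroup.mk'_apply, QuotientGroup.eq_one_iff]
          exact hCM (hcommC a b)
        have h2 : π a * π b * (π b * π a)⁻¹ = π ⁅a, b⁆ := by
          rw [commutatorElement_def, map_mul, map_mul, map_mul, map_inv, map_inv]
          group
        have h3 : π a * π b * (π b * π a)⁻¹ = 1 := by rw [h2, h1]
        have := mul_eq_one_iff_eq_inv.mp h3
        rw [inv_inv] at this
        exact this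
  have hπpow : ∀ i : Fin n, (π (FreeGroup.of i)) ^ k = 1 := by
    intro i
    rw [← map_pow, hπ, QuotientGroup.mk'_apply, QuotientGroup.eq_one_iff]
    exact hpowM i
  -- (h) the splitting homomorphism τ
  letI : CommGroup (F ⧸ M) := { (inferInstance : Group (F ⧸ M)) with mul_comm := hπcomm }
  set τ : Multiplicative (Fin n → ZMod k) →* F ⧸ M :=
    MonoidHom.mk' (fun g => ∏ i : Fin n, (π (FreeGroup.of i)) ^ ((g.toAdd i).val))
      (by
        intro a b
        rw [← Finset.prod_mul_distrib]
        refine Finset.prod_congr rfl fun i _ => ?_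
        have h1 : ((a * b).toAdd i) = a.toAdd i + b.toAdd i := rfl
        rw [h1, ZMod.val_add, ← pow_eq_pow_mod _ (hπpow i), pow_add])
    with hτ
  have hτsingle : ∀ i : Fin n,
      τ (Multiplicative.ofAdd (Pi.single i 1)) = π (FreeGroup.of i) := by
    intro i
    have h0 : τ (Multiplicative.ofAdd (Pi.single i 1)) =
        ∏ j : Fin n, (π (FreeGroup.of j)) ^ (((Pi.single i (1 : ZMod k) : Fin n → ZMod k) j).val) := rfl
    rw [h0, Finset.prod_eq_single i]
    · rw [Pi.single_eq_same, ZMod.val_one, pow_one]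
    · intro j _ hj
      rw [Pi.single_eq_of_ne hj, ZMod.val_zero, pow_zero]
    · intro h; exact absurd (Finset.mem_univ i) h
  have hfactor : τ.comp Ψ = π := by
    apply FreeGroup.ext_hom
    intro a
    rw [MonoidHom.comp_apply, hΨ a, hτsingle a]
  -- (j) ker Ψ ≤ M ≤ K
  have hkerM : ∀ x : F, x ∈ Ψ.ker → x ∈ M := by
    intro x hx
    have h1 : π x = 1 := by
      have hx1 : Ψ x = 1 := by rwa [MonoidHom.mem_ker] at hx
      rw [← hfactor, MonoidHom.comp_apply, hx1, map_one]
    rw [hπ, QuotientGroup.mk'_apply, QuotientGroup.eq_one_iff] at h1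
    exact h1
  -- conclusion
  rw [eq_top_iff]
  intro a _
  obtain ⟨y, rfl⟩ : ∃ y : Ψ.ker, Abelianization.of y = a := Quotient.exists_rep a
  obtain ⟨hmem, hcl⟩ := hMK (hkerM (y : F) y.2)
  have hyy : (⟨(y : F), hmem⟩ : Ψ.ker) = y := Subtype.ext rfl
  rwa [hyy] at hcl
end

section
/- Let k ≥ 2 and n ≥ 2 be integers, and let r_1 = 0, r_2 = 1, r_3, …, r_n ∈ ℂ be pairwise distinct complex numbers. Let U be a topological space and p : U → ℂ a continuous map whose image is exactly ℂ∖{r_1, …, r_n}. Let f_1, …, f_n : U → ℂ be continuous functions with exp(f_1(u)) = −p(u) and exp(f_i(u)) = p(u) − r_i for 2 ≤ i ≤ n and all u ∈ U, and set x̂_i = exp(f_i/k). Assume that for every tuple (j_1, …, j_n) ∈ ℤ^n there exists a map φ : U → U with p∘φ = p and f_i(φ(u)) = f_i(u) + 2πi·j_i for all i and all u. Then for every tuple (a_1, …, a_n) ∈ ℂ^n with a_i ≠ 0 for all i and with r_i + a_1^k + a_i^k = 0 for 2 ≤ i ≤ n, there exists u ∈ U such that x̂_i(u) = a_i for every i.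 (This is the surjectivity, onto the punctured generalized Fermat curve, of the map q(u) = [1, x̂_1(u), …, x̂_n(u)].) -/
open Complex

/-- Surjectivity, onto the punctured generalized Fermat curve, of the map
`q(u) = [1, x̂_1(u), …, x̂_n(u)]`, where `x̂_i = exp (f_i / k)` are the chosen `k`-th
roots of `−p` and `p − r_i`. -/
theorem surjectivity_onto_punctured_fermat (k n : ℕ) (hk : 2 ≤ k) (hn : 2 ≤ n)
    {U : Type*} [TopologicalSpace U]
    (r : Fin n → ℂ) (hr0 : r ⟨0, by omega⟩ = 0) (hr1 : r ⟨1, by omega⟩ = 1)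
    (hrinj : Function.Injective r)
    (p : U → ℂ) (hp : Continuous p) (hrange : Set.range p = (Set.range r)ᶜ)
    (f : Fin n → U → ℂ) (hfc : ∀ i, Continuous (f i))
    (hf0 : ∀ u, Complex.exp (f ⟨0, by omega⟩ u) = -p u)
    (hfi : ∀ i : Fin n, i ≠ ⟨0, by omega⟩ → ∀ u, Complex.exp (f i u) = p u - r i)
    (hdeck : ∀ j : Fin n → ℤ, ∃ φ : U → U, p ∘ φ = p ∧
      ∀ i u, f i (φ u) = f i u + 2 * Real.pi * Complex.I * (j i : ℂ))
    (a : Fin n → ℂ) (ha : ∀ i, a i ≠ 0)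
    (hrel : ∀ i : Fin n, i ≠ ⟨0, by omega⟩ → r i + a ⟨0, by omega⟩ ^ k + a i ^ k = 0) :
    ∃ u : U, ∀ i, Complex.exp (f i u / (k : ℂ)) = a i := by
  have hkc : (k : ℂ) ≠ 0 := Nat.cast_ne_zero.mpr (by omega)
  set i0 : Fin n := ⟨0, by omega⟩ with hi0
  -- the target value of p
  have hmem : -a i0 ^ k ∈ (Set.range r)ᶜ := by
    rintro ⟨i, hi⟩
    by_cases h : i = i0
    · subst h
      have h0 : a i0 ^ k = 0 := by linear_combination hi - hr0
      exact pow_ne_zero k (ha i0) h0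
    · have h0 : a i ^ k = 0 := by linear_combination hrel i h - hi
      exact pow_ne_zero k (ha i) h0
  rw [← hrange] at hmem
  obtain ⟨u₀, hu₀⟩ := hmem
  have hexp : ∀ i, Complex.exp (f i u₀) = a i ^ k := by
    intro i
    by_cases h : i = i0
    · subst h
      rw [hf0, hu₀]; ring
    · rw [hfi i h, hu₀]
      linear_combination -hrel i h
  -- each exp (f i u₀ / k) differs from a i by a k-th root of unity
  have : NeZero k := ⟨by omega⟩
  have hζ : IsPrimitiveRoot (Complex.exp (2 * Real.pi * Complex.I / k)) k :=
    Complex.isPrimitiveRoot_exp k (by omega)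
  have hm : ∀ i, ∃ m : ℕ,
      Complex.exp (f i u₀ / k) = a i * Complex.exp (2 * Real.pi * Complex.I / k) ^ m := by
    intro i
    have hz : (Complex.exp (f i u₀ / k) / a i) ^ k = 1 := by
      rw [div_pow, ← Complex.exp_nat_mul, mul_div_cancel₀ _ hkc, hexp i,
        div_self (pow_ne_zero _ (ha i))]
    obtain ⟨m, _, hmeq⟩ := hζ.eq_pow_of_pow_eq_one hz
    refine ⟨m, ?_⟩
    rw [hmeq, mul_div_cancel₀ _ (ha i)]
  choose m hm using hm
  obtain ⟨φ, hφp, hφf⟩ := hdeck fun i => -(m i : ℤ)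
  refine ⟨φ u₀, fun i => ?_⟩
  rw [hφf i u₀]
  have hsplit : (f i u₀ + 2 * Real.pi * Complex.I * ((-(m i : ℤ) : ℤ) : ℂ)) / k
      = f i u₀ / k - (m i : ℂ) * (2 * Real.pi * Complex.I / k) := by
    push_cast
    field_simp
    ring
  rw [hsplit, Complex.exp_sub, hm i, Complex.exp_nat_mul]
  rw [mul_div_assoc, div_self (pow_ne_zero _ (Complex.exp_ne_zero _)), mul_one]
end
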